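/- A vertex subset I of an oriented graph G is an oriented independent set (i.e., for each pair of distinct vertices x, y ∈ I there exists an oriented coloring identifying x and y) if and only if no two distinct vertices of I are adjacent or connected by a directed 2-path. -/
import Mathlib



/-- An oriented graph: a directed graph with no loops and no directed 2-cycles. -/
structure OGraph (V : Type*) where
  adj : V → V → Prop
  irrefl : ∀ v, ¬ adj v v
  asymm : ∀ u v, adj u v → ¬ adj v u

/-- A homomorphism of oriented graphs. -/
def OGraph.Hom {V W : Type*} (G : OGraph V) (H : OGraph W) (f : V → W) : Prop :=
  ∀ u v, G.adj u v → H.adj (f u) (f v)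

/-- `f` is a `b`-fold oriented `k`-coloring of `G`. -/
def IsFoldColoring {V : Type*} (G : OGraph V) (b k : ℕ) (f : V → Finset (Fin k)) : Prop :=
  (∀ v, (f v).card = b) ∧
  (∀ u v, G.adj u v → Disjoint (f u) (f v)) ∧
  (∀ x y z w, G.adj x y → G.adj z w → ¬ Disjoint (f x) (f w) → Disjoint (f y) (f z))

/-- The `b`-fold oriented chromatic number. -/
noncomputable def foldChrom {V : Type*} (G : OGraph V) (b : ℕ) : ℕ :=
  sInf {k | ∃ f : V → Finset (Fin k), IsFoldColoring G b k f}

/-- The fractional oriented chromatic number: the infimum of `k/b` over all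
`b`-fold oriented `k`-colorings. -/
noncomputable def fracChrom {V : Type*} (G : OGraph V) : ℝ :=
  sInf {x : ℝ | ∃ (b k : ℕ) (f : V → Finset (Fin k)),
    0 < b ∧ IsFoldColoring G b k f ∧ x = (k : ℝ) / b}


theorem stmt7 {V : Type} (G : OGraph V) (I : Set V) :
    (∀ x ∈ I, ∀ y ∈ I, x ≠ y →
        ∃ (W : Type) (H : OGraph W) (f : V → W), G.Hom H f ∧ f x = f y) ↔
      (∀ x ∈ I, ∀ y ∈ I, x ≠ y →
        ¬ (G.adj x y ∨ G.adj y x) ∧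
        ¬ ∃ z, (G.adj x z ∧ G.adj z y) ∨ (G.adj y z ∧ G.adj z x)) := by
  constructor
  · intro h x hx y hy hxy
    obtain ⟨W, H, f, hf, hfeq⟩ := h x hx y hy hxy
    constructor
    · rintro (hadj | hadj)
      · exact H.irrefl (f x) (hfeq ▸ hf x y hadj)
      · exact H.irrefl (f x) (by have := hf y x hadj; rw [hfeq] at this ⊢; exact this)
    · rintro ⟨z, ⟨h1, h2⟩ | ⟨h1, h2⟩⟩
      · exact H.asymm _ _ (hf x z h1) (hfeq ▸ hf z y h2)
      · exact H.asymm _ _ (hf z x h2) (hfeq ▸ hf y z h1)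
  · intro h x hx y hy hxy
    classical
    obtain ⟨hnadj, hnpath⟩ := h x hx y hy hxy
    set f : V → V := fun v => if v = y then x else v with hfdef
    have hfx : f x = x := by simp [hfdef, hxy]
    have hfy : f y = x := by simp [hfdef]
    have key : ∀ u v : V, f u = f v → u = v ∨ (u = x ∧ v = y) ∨ (u = y ∧ v = x) := by
      intro u v huv
      by_cases hu : u = y
      · by_cases hv : v = y
        · exact Or.inl (hu.trans hv.symm)
        · simp only [hfdef, hu, hv, if_pos rfl, if_neg hv] at huv
          exact Or.inr (Or.inr ⟨hu, huv.symm⟩)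
      · by_cases hv : v = y
        · simp only [hfdef, hu, hv, if_neg hu, if_pos rfl] at huv
          exact Or.inr (Or.inl ⟨huv, hv⟩)
        · simp only [hfdef, if_neg hu, if_neg hv] at huv
          exact Or.inl huv
    refine ⟨V, ⟨fun a b => ∃ u v, G.adj u v ∧ f u = a ∧ f v = b, ?_, ?_⟩, f,
      fun u v huv => ⟨u, v, huv, rfl, rfl⟩, hfx.trans hfy.symm⟩
    · rintro a ⟨u, v, huv, hu, hv⟩
      rcases key u v (hu.trans hv.symm) with h1 | ⟨h1, h2⟩ | ⟨h1, h2⟩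
      · exact G.irrefl u (h1 ▸ huv)
      · exact hnadj (Or.inl (h1 ▸ h2 ▸ huv))
      · exact hnadj (Or.inr (h1 ▸ h2 ▸ huv))
    · rintro a b ⟨u, v, huv, hu, hv⟩ ⟨u', v', huv', hu', hv'⟩
      rcases key u v' (hu.trans hv'.symm) with h1 | ⟨h1, h2⟩ | ⟨h1, h2⟩ <;>
        rcases key v u' (hv.trans hu'.symm) with h3 | ⟨h3, h4⟩ | ⟨h3, h4⟩ <;>
          subst_vars
      · exact G.asymm _ _ huv huv'
      · exact hnpath ⟨_, Or.inr ⟨huv', huv⟩⟩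
      · exact hnpath ⟨_, Or.inl ⟨huv', huv⟩⟩
      · exact hnpath ⟨_, Or.inl ⟨huv, huv'⟩⟩
      · exact G.irrefl _ huv
      · exact hnadj (Or.inl huv)
      · exact hnpath ⟨_, Or.inr ⟨huv, huv'⟩⟩
      · exact hnadj (Or.inr huv)
      · exact G.irrefl _ huv
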